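/- Let n, m ∈ ℕ, λ_1,…,λ_n ∈ ℂ, z_1,…,z_n ∈ 𝔻, μ_1,…,μ_m ∈ ℂ, w_1,…,w_m ∈ 𝔻, and suppose that for every holomorphic g : 𝔻 → ℂ with g(0) = 0 and finite Bloch seminorm, ∑_{i=1}^n |λ_i|²|g'(z_i)|² ≤ ∑_{j=1}^m |μ_j|²|g'(w_j)|². Then there exists an n × m complex matrix (a_{ij}) defining a linear map ℂ^m → ℂ^n of Euclidean operator norm at most 1 such that λ_i g'(z_i) = ∑_{j=1}^m a_{ij} μ_j g'(w_j) for every such g and every 1 ≤ i ≤ n. -/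

import Mathlib

open Complex Metric Set

theorem stmt6 (n m : ℕ) (lam : Fin n → ℂ) (zs : Fin n → ℂ) (hzs : ∀ i, zs i ∈ ball (0 : ℂ) 1)
    (mu : Fin m → ℂ) (ws : Fin m → ℂ) (hws : ∀ j, ws j ∈ ball (0 : ℂ) 1)
    (hdom : ∀ g : ℂ → ℂ, DifferentiableOn ℂ g (ball (0 : ℂ) 1) → g 0 = 0 →
      (∃ M, ∀ z ∈ ball (0 : ℂ) 1, (1 - ‖z‖ ^ 2) * ‖deriv g z‖ ≤ M) →
      ∑ i, ‖lam i‖ ^ 2 * ‖deriv g (zs i)‖ ^ 2 ≤ ∑ j, ‖mu j‖ ^ 2 * ‖deriv g (ws j)‖ ^ 2) :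
    ∃ a : Matrix (Fin n) (Fin m) ℂ,
      (∀ t : Fin m → ℂ, ∑ i, ‖∑ j, a i j * t j‖ ^ 2 ≤ ∑ j, ‖t j‖ ^ 2) ∧
      ∀ g : ℂ → ℂ, DifferentiableOn ℂ g (ball (0 : ℂ) 1) → g 0 = 0 →
        (∃ M, ∀ z ∈ ball (0 : ℂ) 1, (1 - ‖z‖ ^ 2) * ‖deriv g z‖ ≤ M) →
        ∀ i, lam i * deriv g (zs i) = ∑ j, a i j * (mu j * deriv g (ws j)) := by
  classical
  set E := EuclideanSpace ℂ (Fin m) with hE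
  set F := EuclideanSpace ℂ (Fin n) with hF
  set B : (ℂ → ℂ) → Prop := fun g => DifferentiableOn ℂ g (ball (0:ℂ) 1) ∧ g 0 = 0 ∧
    ∃ M, ∀ z ∈ ball (0:ℂ) 1, (1 - ‖z‖ ^ 2) * ‖deriv g z‖ ≤ M with hB
  set v : (ℂ → ℂ) → E := fun g => WithLp.toLp 2 (fun j => mu j * deriv g (ws j)) with hv
  set u : (ℂ → ℂ) → F := fun g => WithLp.toLp 2 (fun i => lam i * deriv g (zs i)) with hu
  -- closure of B under add and smul, with derivative formulas on the ball
  have hderiv_add : ∀ g1 g2 : ℂ → ℂ, DifferentiableOn ℂ g1 (ball (0:ℂ) 1) →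
      DifferentiableOn ℂ g2 (ball (0:ℂ) 1) → ∀ z ∈ ball (0:ℂ) 1,
      deriv (g1 + g2) z = deriv g1 z + deriv g2 z := by
    intro g1 g2 h1 h2 z hz
    exact deriv_fun_add (h1.differentiableAt (isOpen_ball.mem_nhds hz))
      (h2.differentiableAt (isOpen_ball.mem_nhds hz))
  have hderiv_smul : ∀ (c : ℂ) (g : ℂ → ℂ), DifferentiableOn ℂ g (ball (0:ℂ) 1) →
      ∀ z ∈ ball (0:ℂ) 1, deriv (c • g) z = c * deriv g z := by
    intro c g h z hz
    exact deriv_const_smul c (h.differentiableAt (isOpen_ball.mem_nhds hz))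
  have hBadd : ∀ g1 g2, B g1 → B g2 → B (g1 + g2) := by
    rintro g1 g2 ⟨hd1, h01, M1, hM1⟩ ⟨hd2, h02, M2, hM2⟩
    refine ⟨hd1.add hd2, by simp [h01, h02], M1 + M2, fun z hz => ?_⟩
    rw [hderiv_add g1 g2 hd1 hd2 z hz]
    have h1z : (0:ℝ) ≤ 1 - ‖z‖ ^ 2 := by
      have : ‖z‖ < 1 := by simpa using mem_ball_iff_norm.mp hz
      nlinarith [norm_nonneg z]
    calc (1 - ‖z‖ ^ 2) * ‖deriv g1 z + deriv g2 z‖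
        ≤ (1 - ‖z‖ ^ 2) * (‖deriv g1 z‖ + ‖deriv g2 z‖) := by
          exact mul_le_mul_of_nonneg_left (norm_add_le _ _) h1z
      _ = (1 - ‖z‖ ^ 2) * ‖deriv g1 z‖ + (1 - ‖z‖ ^ 2) * ‖deriv g2 z‖ := by ring
      _ ≤ M1 + M2 := add_le_add (hM1 z hz) (hM2 z hz)
  have hBsmul : ∀ (c : ℂ) g, B g → B (c • g) := by
    rintro c g ⟨hd, h0, M, hM⟩
    refine ⟨hd.const_smul c, by simp [h0], ‖c‖ * M, fun z hz => ?_⟩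
    rw [hderiv_smul c g hd z hz]
    have h1z : (0:ℝ) ≤ 1 - ‖z‖ ^ 2 := by
      have : ‖z‖ < 1 := by simpa using mem_ball_iff_norm.mp hz
      nlinarith [norm_nonneg z]
    calc (1 - ‖z‖ ^ 2) * ‖c * deriv g z‖ = ‖c‖ * ((1 - ‖z‖ ^ 2) * ‖deriv g z‖) := by
          rw [norm_mul]; ring
      _ ≤ ‖c‖ * M := mul_le_mul_of_nonneg_left (hM z hz) (norm_nonneg c)
  -- the graph submodule
  set W : Submodule ℂ (E × F) :=
    { carrier := {p | ∃ g, B g ∧ p = (v g, u g)}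
      add_mem' := by
        rintro _ _ ⟨g1, hg1, rfl⟩ ⟨g2, hg2, rfl⟩
        refine ⟨g1 + g2, hBadd g1 g2 hg1 hg2, ?_⟩
        have e1 : v (g1 + g2) = v g1 + v g2 := by
          ext j
          show mu j * deriv (g1 + g2) (ws j) = mu j * deriv g1 (ws j) + mu j * deriv g2 (ws j)
          rw [hderiv_add g1 g2 hg1.1 hg2.1 (ws j) (hws j)]; ring
        have e2 : u (g1 + g2) = u g1 + u g2 := by
          ext i
          show lam i * deriv (g1 + g2) (zs i) = lam i * deriv g1 (zs i) + lam i * deriv g2 (zs i)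
          rw [hderiv_add g1 g2 hg1.1 hg2.1 (zs i) (hzs i)]; ring
        simp [e1, e2, Prod.ext_iff]
      smul_mem' := by
        rintro c _ ⟨g, hg, rfl⟩
        refine ⟨c • g, hBsmul c g hg, ?_⟩
        have e1 : v (c • g) = c • v g := by
          ext j
          show mu j * deriv (c • g) (ws j) = c * (mu j * deriv g (ws j))
          rw [hderiv_smul c g hg.1 (ws j) (hws j)]; ring
        have e2 : u (c • g) = c • u g := by
          ext i
          show lam i * deriv (c • g) (zs i) = c * (lam i * deriv g (zs i))
          rw [hderiv_smul c g hg.1 (zs i) (hzs i)]; ring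
        simp [e1, e2, Prod.ext_iff]
      zero_mem' := by
        have hd0 : deriv (0 : ℂ → ℂ) = fun _ => 0 := by
          funext z; exact deriv_const z 0
        refine ⟨0, ⟨differentiableOn_const 0, rfl, 0, fun z hz => ?_⟩, ?_⟩
        · rw [hd0]; simp
        · refine Prod.ext ?_ ?_ <;> ext k <;>
            · show (0 : ℂ) = _ * deriv (0 : ℂ → ℂ) _
              rw [hd0]; simp } with hW
  -- the key inequality
  have hineq : ∀ g, B g → ∑ i, ‖u g i‖ ^ 2 ≤ ∑ j, ‖v g j‖ ^ 2 := by
    rintro g ⟨hd, h0, hM⟩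
    have := hdom g hd h0 hM
    simpa [hu, hv, norm_mul, mul_pow] using this
  -- W is a graph
  have hg0 : ∀ (x : E × F) (_hx : x ∈ W) (_hx' : x.fst = 0), x.snd = 0 := by
    rintro x ⟨g, hg, rfl⟩ hfst
    have hfst' : v g = 0 := hfst
    show u g = 0
    have h1 : ∑ j, ‖v g j‖ ^ 2 = 0 := by
      apply Finset.sum_eq_zero
      intro j _
      have : v g j = 0 := by rw [hfst']; simp
      simp [this]
    have h2 : ∑ i, ‖u g i‖ ^ 2 ≤ 0 := h1 ▸ hineq g hg
    have h3 : ∀ i ∈ Finset.univ, ‖u g i‖ ^ 2 = 0 := by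
      intro i _
      have hnn : ∀ i ∈ (Finset.univ : Finset (Fin n)), (0:ℝ) ≤ ‖u g i‖ ^ 2 :=
        fun i _ => by positivity
      have := (Finset.sum_eq_zero_iff_of_nonneg hnn).mp (le_antisymm h2 (Finset.sum_nonneg hnn))
      exact this i (Finset.mem_univ i)
    ext i
    have := h3 i (Finset.mem_univ i)
    simpa using this
  set D := W.map (LinearMap.fst ℂ E F) with hD
  set T : D →ₗ[ℂ] F := W.toLinearPMapAux hg0 with hT
  have hTgraph : ∀ x : D, ((x : E), T x) ∈ W := fun x => Submodule.valFromGraph_mem hg0 x.2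
  have hTuniq : ∀ (x : D) (g : ℂ → ℂ), B g → (x : E) = v g → T x = u g := by
    intro x g hg hx
    have h1 : ((x : E), T x) ∈ W := hTgraph x
    have h2 : ((v g : E), u g) ∈ W := ⟨g, hg, rfl⟩
    have h3 := W.sub_mem h1 h2
    have h4 : (((x : E) - v g, T x - u g) : E × F) ∈ W := h3
    have h5 : ((x : E) - v g) = 0 := by rw [hx]; simp
    have := hg0 _ h4 h5
    exact sub_eq_zero.mp this
  set P := D.orthogonalProjectionOnto with hP
  set L : E →ₗ[ℂ] F := T.comp ((P : E →L[ℂ] D) : E →ₗ[ℂ] D) with hL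
  -- contraction property
  have hcontr : ∀ t : E, ∑ i, ‖L t i‖ ^ 2 ≤ ∑ j, ‖t j‖ ^ 2 := by
    intro t
    obtain ⟨p, hpW, hfst⟩ := Submodule.mem_map.mp (P t).2
    obtain ⟨g, hg, rfl⟩ := hpW
    have hvg : ((P t : E)) = v g := hfst.symm
    have hLt : L t = u g := hTuniq (P t) g hg hvg
    rw [hLt]
    calc ∑ i, ‖u g i‖ ^ 2 ≤ ∑ j, ‖v g j‖ ^ 2 := hineq g hg
      _ = ‖(P t : E)‖ ^ 2 := by
          rw [hvg, EuclideanSpace.norm_eq]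
          rw [Real.sq_sqrt (Finset.sum_nonneg fun j _ => by positivity)]
      _ ≤ ‖t‖ ^ 2 := by
          have h1 : ‖(P t : E)‖ ≤ ‖t‖ := by
            calc ‖(P t : E)‖ = ‖P t‖ := rfl
              _ ≤ ‖P‖ * ‖t‖ := P.le_opNorm t
              _ ≤ 1 * ‖t‖ := mul_le_mul_of_nonneg_right (Submodule.orthogonalProjectionOnto_norm_le D) (norm_nonneg t)
              _ = ‖t‖ := one_mul _
          exact pow_le_pow_left₀ (norm_nonneg _) h1 2
      _ = ∑ j, ‖t j‖ ^ 2 := by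
          rw [EuclideanSpace.norm_eq, Real.sq_sqrt (Finset.sum_nonneg fun j _ => by positivity)]
  -- interpolation property
  have hinterp : ∀ g, B g → L (v g) = u g := by
    intro g hg
    have hmem : v g ∈ D := ⟨(v g, u g), ⟨g, hg, rfl⟩, rfl⟩
    have hproj : ((P (v g) : E)) = v g := Submodule.starProjection_eq_self_iff.mpr hmem
    exact hTuniq (P (v g)) g hg hproj
  -- the matrix
  set a : Matrix (Fin n) (Fin m) ℂ := fun i j => L (EuclideanSpace.single j (1:ℂ)) i with ha
  have hdecomp : ∀ t : E, t = ∑ j, t j • EuclideanSpace.single j (1:ℂ) := by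
    intro t
    ext k
    have : (∑ j, t j • EuclideanSpace.single j (1:ℂ)) k
        = ∑ j, (t j • EuclideanSpace.single j (1:ℂ)) k := by
      rw [WithLp.ofLp_sum, Finset.sum_apply]
    rw [this]
    simp [EuclideanSpace.single_apply]
  have hLsum : ∀ (t : E) (i : Fin n), L t i = ∑ j, a i j * t j := by
    intro t i
    conv_lhs => rw [hdecomp t]
    rw [map_sum]
    have : (∑ j, L (t j • EuclideanSpace.single j (1:ℂ))) i
        = ∑ j, (L (t j • EuclideanSpace.single j (1:ℂ))) i :=
      by rw [WithLp.ofLp_sum, Finset.sum_apply]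
    rw [this]
    congr 1
    funext j
    rw [map_smul]
    show t j * L (EuclideanSpace.single j (1:ℂ)) i = a i j * t j
    rw [ha]; ring
  refine ⟨a, ?_, ?_⟩
  · intro t
    have := hcontr (WithLp.toLp 2 t)
    calc ∑ i, ‖∑ j, a i j * t j‖ ^ 2 = ∑ i, ‖L (WithLp.toLp 2 t) i‖ ^ 2 := by
          congr 1; funext i; rw [hLsum (WithLp.toLp 2 t) i]
      _ ≤ ∑ j, ‖t j‖ ^ 2 := hcontr (WithLp.toLp 2 t)
  · intro g hd h0 hM i
    have hBg : B g := ⟨hd, h0, hM⟩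
    have := hinterp g hBg
    calc lam i * deriv g (zs i) = u g i := rfl
      _ = L (v g) i := by rw [hinterp g hBg]
      _ = ∑ j, a i j * v g j := hLsum (v g) i
      _ = ∑ j, a i j * (mu j * deriv g (ws j)) := rfl
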